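/- Let J ⊆ Z/2Z[e_1,...,e_n,x] be an ideal, let ψ: Z/2Z[e_1,...,e_n,x] → Z/2Z[e_1,...,e_n] be the evaluation x ↦ 0, and let A = Z/2Z[e_1,...,e_n,x]/K for some ideal K ⊇ J such that A is free over Z/2Z[x]. Suppose ψ(J) = ψ(K) and suppose that whenever x·γ ∈ K one has γ ∈ K. Then, arguing by induction on degree, every homogeneous element of K lies in J; i.e., K = J. -/

import Mathlib

open MvPolynomial

/-- The evaluation `ψ : (ℤ/2)[e₁,…,eₙ,x] → (ℤ/2)[e₁,…,eₙ]` sending `x ↦ 0`. -/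
noncomputable def psiMap (n : ℕ) :
    MvPolynomial (Fin n ⊕ Unit) (ZMod 2) →+* MvPolynomial (Fin n) (ZMod 2) :=
  (aeval (Sum.elim MvPolynomial.X (fun _ => 0))).toRingHom

lemma psi_rename (n : ℕ) (q : MvPolynomial (Fin n) (ZMod 2)) :
    psiMap n (rename Sum.inl q) = q := by
  show (aeval (Sum.elim MvPolynomial.X (fun _ => 0))) (rename Sum.inl q) = q
  rw [aeval_rename]
  simp [Function.comp_def]

lemma psi_div (n : ℕ) (f : MvPolynomial (Fin n ⊕ Unit) (ZMod 2)) :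
    ∃ γ, f = X (Sum.inr ()) * γ + rename Sum.inl (psiMap n f) := by
  induction f using MvPolynomial.induction_on with
  | C a => exact ⟨0, by simp [psiMap]⟩
  | add p q hp hq =>
    obtain ⟨γ, hγ⟩ := hp; obtain ⟨δ, hδ⟩ := hq
    exact ⟨γ + δ, by nth_rewrite 1 [hγ, hδ]; rw [map_add, map_add]; ring⟩
  | mul_X p i hp =>
    obtain ⟨γ, hγ⟩ := hp
    cases i with
    | inl j =>
      refine ⟨γ * X (Sum.inl j), ?_⟩
      have : psiMap n (p * X (Sum.inl j)) = psiMap n p * X j := by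
        simp [psiMap]
      rw [this, map_mul]
      calc p * X (Sum.inl j)
          = (X (Sum.inr ()) * γ + rename Sum.inl (psiMap n p)) * X (Sum.inl j) := by
            rw [← hγ]
        _ = _ := by simp [rename_X]; ring
    | inr u =>
      refine ⟨p, ?_⟩
      have : psiMap n (p * X (Sum.inr u)) = 0 := by
        simp [psiMap]
      rw [this]; simp [mul_comm]

lemma degree_sub_single {σ : Type*} (d : σ →₀ ℕ) (s : σ) (hs : s ∈ d.support) :
    (d - Finsupp.single s 1).degree + 1 = d.degree := by
  have hle : Finsupp.single s 1 ≤ d := by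
    rwa [Finsupp.single_le_iff, Nat.one_le_iff_ne_zero, ← Finsupp.mem_support_iff]
  have h1 : (Finsupp.single s 1).degree = 1 := by
    exact Finsupp.degree_single s 1
  have hw := Finsupp.degree_eq_weight_one (σ := σ) (R := ℕ)
  calc (d - Finsupp.single s 1).degree + 1
      = (d - Finsupp.single s 1).degree + (Finsupp.single s 1).degree := by rw [h1]
    _ = ((d - Finsupp.single s 1) + Finsupp.single s 1).degree := by
        rw [hw]; exact (map_add _ _ _).symm
    _ = d.degree := by rw [tsub_add_cancel_of_le hle]

lemma homComp_X_mul {σ : Type*} {R : Type*} [CommSemiring R] (s : σ) (e : ℕ)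
    (γ : MvPolynomial σ R) :
    homogeneousComponent (e + 1) (X s * γ) = X s * homogeneousComponent e γ := by
  classical
  ext d
  rw [coeff_homogeneousComponent, coeff_X_mul', coeff_X_mul', coeff_homogeneousComponent]
  by_cases hs : s ∈ d.support
  · simp only [if_pos hs]
    have hdeg := degree_sub_single d s hs
    by_cases h : d.degree = e + 1
    · rw [if_pos h, if_pos (by omega)]
    · rw [if_neg h, if_neg (by omega)]
  · simp [hs]

lemma homComp_X_mul_zero {σ : Type*} {R : Type*} [CommSemiring R] (s : σ)
    (γ : MvPolynomial σ R) :
    homogeneousComponent 0 (X s * γ) = 0 := by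
  classical
  rw [homogeneousComponent_zero, coeff_X_mul']
  simp

/-- If `J ⊆ K` are homogeneous ideals of `(ℤ/2)[e₁,…,eₙ,x]` with `ψ(J) = ψ(K)`
(where `ψ` sets `x = 0`), and `x·γ ∈ K` implies `γ ∈ K`, then `K = J`. -/
theorem stmt7 (n : ℕ) (J K : Ideal (MvPolynomial (Fin n ⊕ Unit) (ZMod 2)))
    (hJK : J ≤ K)
    (hJhom : ∀ f ∈ J, ∀ i : ℕ, homogeneousComponent i f ∈ J)
    (hKhom : ∀ f ∈ K, ∀ i : ℕ, homogeneousComponent i f ∈ K)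
    (hpsi : Ideal.map (psiMap n) J = Ideal.map (psiMap n) K)
    (hsat : ∀ γ : MvPolynomial (Fin n ⊕ Unit) (ZMod 2),
      X (Sum.inr ()) * γ ∈ K → γ ∈ K) :
    K = J := by
  refine le_antisymm ?_ hJK
  have key : ∀ d : ℕ, ∀ f ∈ K, f.IsHomogeneous d → f ∈ J := by
    intro d
    induction d using Nat.strong_induction_on with
    | _ d IH =>
      intro f hfK hfhom
      have hψf : psiMap n f ∈ Ideal.map (psiMap n) J := by
        rw [hpsi]; exact Ideal.mem_map_of_mem _ hfK
      have hsurj : Function.Surjective (psiMap n) := fun q => ⟨rename Sum.inl q, psi_rename n q⟩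
      obtain ⟨g, hgJ, hg⟩ := (Ideal.mem_map_iff_of_surjective _ hsurj).mp hψf
      obtain ⟨γ, hγ⟩ := psi_div n (f - g)
      have hψfg : psiMap n (f - g) = 0 := by rw [map_sub, hg, sub_self]
      rw [hψfg, map_zero, add_zero] at hγ
      have hγK : γ ∈ K := hsat γ (by rw [← hγ]; exact Ideal.sub_mem K hfK (hJK hgJ))
      have hfg : f = g + X (Sum.inr ()) * γ := by rw [← hγ]; ring
      have hfd : homogeneousComponent d f = f := by
        rw [homogeneousComponent_of_mem ((mem_homogeneousSubmodule _ _).mpr hfhom),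
          if_pos rfl]
      cases d with
      | zero =>
        rw [← hfd, hfg, map_add, homComp_X_mul_zero, add_zero]
        exact hJhom g hgJ 0
      | succ e =>
        have hdec : f = homogeneousComponent (e + 1) g
            + X (Sum.inr ()) * homogeneousComponent e γ := by
          conv_lhs => rw [← hfd, hfg]
          rw [map_add, homComp_X_mul]
        rw [hdec]
        refine Ideal.add_mem J (hJhom g hgJ _) (Ideal.mul_mem_left _ _ ?_)
        exact IH e (Nat.lt_succ_self e) _ (hKhom γ hγK e)
          (homogeneousComponent_isHomogeneous e γ)
  intro f hfK
  rw [← sum_homogeneousComponent f]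
  exact Ideal.sum_mem J
    (fun i _ => key i _ (hKhom f hfK i) (homogeneousComponent_isHomogeneous i f))
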